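/- arXiv:2104.05972 — 6 statements merged into one kernel-verified Lean document; each statement's English description precedes it below -/
import Mathlib

section
/- Let r > 0 and let x = r·e^{iu}, y = r·e^{iv} with 0 < u ≤ v < π. Then |x - ȳ| - |x - y| = (1/r)·|x - r|·|y + r|, where ȳ denotes the complex conjugate of y. -/
open Complex Real

lemma aux_abs (θ : ℝ) : ‖Complex.exp (θ*Complex.I) - 1‖ = 2 * |Real.sin (θ/2)| := by
  have h1 : Complex.exp (θ*Complex.I) - 1
      = Complex.exp ((θ/2)*Complex.I) * (Complex.exp ((θ/2)*Complex.I) - Complex.exp (-((θ/2)*Complex.I))) := by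
    rw [mul_sub, ← Complex.exp_add, ← Complex.exp_add]
    ring_nf
    rw [Complex.exp_zero]; ring
  have h2 : Complex.exp ((θ/2)*Complex.I) - Complex.exp (-((θ/2)*Complex.I))
      = 2 * Complex.sin (((θ/2 : ℝ)) : ℂ) * Complex.I := by
    rw [show -(((θ:ℂ)/2)*Complex.I) = ((-(θ/2) : ℝ) : ℂ)*Complex.I from by push_cast; ring]
    rw [Complex.exp_mul_I, Complex.exp_mul_I]
    push_cast
    simp [Complex.sin_neg, Complex.cos_neg]
    ring
  rw [h1, h2, norm_mul, norm_mul, norm_mul]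
  rw [show ((θ:ℂ)/2) = ((θ/2 : ℝ) : ℂ) from by push_cast; ring]
  rw [← Complex.ofReal_sin, Complex.norm_real, Real.norm_eq_abs, Complex.norm_exp_ofReal_mul_I, Complex.norm_I]
  rw [Complex.norm_two]; ring

theorem stmt1 (r u v : ℝ) (hr : 0 < r) (hu : 0 < u) (huv : u ≤ v) (hv : v < Real.pi)
    (x y : ℂ) (hx : x = r * Complex.exp (u * Complex.I))
    (hy : y = r * Complex.exp (v * Complex.I)) :
    ‖x - (starRingEnd ℂ) y‖ - ‖x - y‖ =
      (1 / r) * ‖x - r‖ * ‖y + r‖ := by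
  have hcy : (starRingEnd ℂ) y = (r:ℂ) * Complex.exp (((-v : ℝ)) * Complex.I) := by
    rw [hy]
    simp [← Complex.exp_conj, map_mul, Complex.conj_ofReal, Complex.conj_I]
  have habsr : ‖(r:ℂ)‖ = r := by
    rw [Complex.norm_real, Real.norm_eq_abs, abs_of_pos hr]
  -- factorizations
  have e1 : x - (starRingEnd ℂ) y
      = (r:ℂ) * Complex.exp (((-v:ℝ))*Complex.I) * (Complex.exp (((u+v):ℝ)*Complex.I) - 1) := by
    have e : Complex.exp (((-v:ℝ):ℂ)*Complex.I) * Complex.exp ((((u+v):ℝ):ℂ)*Complex.I)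
        = Complex.exp ((u:ℂ)*Complex.I) := by
      rw [← Complex.exp_add]; push_cast; ring_nf
    rw [hx, hcy]; push_cast at e ⊢; linear_combination (-(r:ℂ)) * e
  have e2 : x - y
      = (r:ℂ) * Complex.exp ((v:ℝ)*Complex.I) * (Complex.exp (((u-v):ℝ)*Complex.I) - 1) := by
    have e : Complex.exp ((v:ℂ)*Complex.I) * Complex.exp ((((u-v):ℝ):ℂ)*Complex.I)
        = Complex.exp ((u:ℂ)*Complex.I) := by
      rw [← Complex.exp_add]; push_cast; ring_nf
    rw [hx, hy]; push_cast at e ⊢; linear_combination (-(r:ℂ)) * e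
  have e3 : x - r = (r:ℂ) * (Complex.exp ((u:ℝ)*Complex.I) - 1) := by
    rw [hx]; ring
  have e4 : y + r
      = (r:ℂ) * Complex.exp ((Real.pi:ℝ)*Complex.I) * (Complex.exp (((v-Real.pi):ℝ)*Complex.I) - 1) := by
    have e : Complex.exp ((Real.pi:ℂ)*Complex.I) * Complex.exp ((((v-Real.pi):ℝ):ℂ)*Complex.I)
        = Complex.exp ((v:ℂ)*Complex.I) := by
      rw [← Complex.exp_add]; push_cast; ring_nf
    have hpi : Complex.exp ((Real.pi:ℂ)*Complex.I) = -1 := Complex.exp_pi_mul_I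
    rw [hy]; push_cast at e ⊢; rw [hpi] at e ⊢; linear_combination (-(r:ℂ)) * e
  rw [e1, e2, e3, e4]
  simp only [norm_mul, Complex.norm_exp_ofReal_mul_I, aux_abs, habsr]
  have pi_pos := Real.pi_pos
  have hs1 : |Real.sin ((u+v)/2)| = Real.sin ((u+v)/2) :=
    abs_of_nonneg (Real.sin_nonneg_of_nonneg_of_le_pi (by linarith) (by linarith))
  have hs2 : |Real.sin ((u-v)/2)| = Real.sin ((v-u)/2) := by
    rw [show (u-v)/2 = -((v-u)/2) by ring, Real.sin_neg, abs_neg]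
    exact abs_of_nonneg (Real.sin_nonneg_of_nonneg_of_le_pi (by linarith) (by linarith))
  have hs3 : |Real.sin (u/2)| = Real.sin (u/2) :=
    abs_of_nonneg (Real.sin_nonneg_of_nonneg_of_le_pi (by linarith) (by linarith))
  have hs4 : |Real.sin ((v-Real.pi)/2)| = Real.sin ((Real.pi-v)/2) := by
    rw [show (v-Real.pi)/2 = -((Real.pi-v)/2) by ring, Real.sin_neg, abs_neg]
    exact abs_of_nonneg (Real.sin_nonneg_of_nonneg_of_le_pi (by linarith) (by linarith))
  rw [hs1, hs2, hs3, hs4]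
  rw [show (u+v)/2 = u/2 + v/2 by ring, show (v-u)/2 = v/2 - u/2 by ring,
    show (Real.pi - v)/2 = Real.pi/2 - v/2 by ring,
    Real.sin_add, Real.sin_sub, Real.sin_sub, Real.sin_pi_div_two, Real.cos_pi_div_two]
  field_simp
  ring
end

section
/- Fix θ with π < θ < 2π and r = 1. For x = e^{i(1-k)θ/2} and y = e^{i(1+k)θ/2} with 0 < k < 1, the cross-ratios satisfy |1, x, e^{iθ}, y| = sin(θ/2)·sin(kθ/2)/sin²((1-k)θ/4) and |0, x, ∞, y| = 2·sin(kθ/2), and the limit as k → 0⁺ of their quotient |1,x,e^{iθ},y|/|0,x,∞,y| equals cos(θ/4)/sin(θ/4), which is strictly less than 1. -/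
open Complex Real Filter Topology

/-- The (absolute) cross-ratio `|a,b,c,d|` of four finite points. -/
noncomputable def crossRatio (a b c d : ℂ) : ℝ :=
  (‖a - c‖ * ‖b - d‖) /
    (‖a - b‖ * ‖c - d‖)

lemma abs_exp_sub_exp (a b : ℝ) :
    ‖Complex.exp ((a:ℂ) * Complex.I) - Complex.exp ((b:ℂ) * Complex.I)‖
      = 2 * |Real.sin ((a - b) / 2)| := by
  have h : Complex.exp ((a:ℂ) * Complex.I) - Complex.exp ((b:ℂ) * Complex.I)
      = Complex.exp ((((a+b)/2 : ℝ):ℂ) * Complex.I) *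
        (2 * Complex.I * Complex.sin ((((a-b)/2 : ℝ):ℂ))) := by
    have e1 : ((a:ℂ)) * Complex.I = (((a+b)/2 : ℝ):ℂ) * Complex.I + (((a-b)/2 : ℝ):ℂ) * Complex.I := by
      push_cast; ring
    have e2 : ((b:ℂ)) * Complex.I = (((a+b)/2 : ℝ):ℂ) * Complex.I + (-(((a-b)/2 : ℝ):ℂ)) * Complex.I := by
      push_cast; ring
    rw [e1, e2, Complex.exp_add, Complex.exp_add, Complex.sin]
    ring_nf
    simp only [Complex.I_sq]
    ring
  rw [h]
  rw [norm_mul, Complex.norm_exp_ofReal_mul_I, one_mul, norm_mul, norm_mul,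
    Complex.norm_two, Complex.norm_I, mul_one, ← Complex.ofReal_sin, Complex.norm_real, Real.norm_eq_abs]

theorem stmt6 (θ : ℝ) (hθ1 : Real.pi < θ) (hθ2 : θ < 2 * Real.pi)
    (x y : ℝ → ℂ)
    (hx : ∀ k, x k = Complex.exp (((1 - k) * θ / 2) * Complex.I))
    (hy : ∀ k, y k = Complex.exp (((1 + k) * θ / 2) * Complex.I)) :
    (∀ k : ℝ, 0 < k → k < 1 →
        crossRatio 1 (x k) (Complex.exp (θ * Complex.I)) (y k) =
          Real.sin (θ / 2) * Real.sin (k * θ / 2) / (Real.sin ((1 - k) * θ / 4))^2) ∧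
    (∀ k : ℝ, 0 < k → k < 1 →
        ‖x k - y k‖ / ‖x k‖ = 2 * Real.sin (k * θ / 2)) ∧
    Filter.Tendsto
      (fun k : ℝ => crossRatio 1 (x k) (Complex.exp (θ * Complex.I)) (y k) /
        (‖x k - y k‖ / ‖x k‖))
      (nhdsWithin 0 (Set.Ioi 0)) (nhds (Real.cos (θ / 4) / Real.sin (θ / 4))) ∧
    Real.cos (θ / 4) / Real.sin (θ / 4) < 1 := by
  have hpi := Real.pi_pos
  have hθ0 : 0 < θ := lt_trans hpi hθ1
  have hs1 : 0 < Real.sin (θ / 2) :=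
    Real.sin_pos_of_pos_of_lt_pi (by linarith) (by linarith)
  have hsθ4 : 0 < Real.sin (θ / 4) :=
    Real.sin_pos_of_pos_of_lt_pi (by linarith) (by linarith)
  have hex : ∀ k : ℝ, x k = Complex.exp ((((1-k)*θ/2 : ℝ) : ℂ) * Complex.I) := by
    intro k; rw [hx k]; congr 1; push_cast; ring
  have hey : ∀ k : ℝ, y k = Complex.exp ((((1+k)*θ/2 : ℝ) : ℂ) * Complex.I) := by
    intro k; rw [hy k]; congr 1; push_cast; ring
  have hs2 : ∀ k : ℝ, 0 < k → k < 1 → 0 < Real.sin (k * θ / 2) := by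
    intro k hk0 hk1
    exact Real.sin_pos_of_pos_of_lt_pi (by positivity) (by nlinarith)
  have hs3 : ∀ k : ℝ, 0 < k → k < 1 → 0 < Real.sin ((1 - k) * θ / 4) := by
    intro k hk0 hk1
    exact Real.sin_pos_of_pos_of_lt_pi (by nlinarith) (by nlinarith)
  have hA : ‖1 - Complex.exp ((θ:ℝ) * Complex.I)‖ = 2 * Real.sin (θ / 2) := by
    have h := abs_exp_sub_exp 0 θ
    rw [Complex.ofReal_zero, zero_mul, Complex.exp_zero] at h
    rw [h, show (0 - θ)/2 = -(θ/2) by ring, Real.sin_neg, abs_neg, abs_of_pos hs1]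
  have hB : ∀ k : ℝ, 0 < k → k < 1 →
      ‖x k - y k‖ = 2 * Real.sin (k * θ / 2) := by
    intro k hk0 hk1
    rw [hex, hey, abs_exp_sub_exp,
      show ((1-k)*θ/2 - (1+k)*θ/2)/2 = -(k*θ/2) by ring,
      Real.sin_neg, abs_neg, abs_of_pos (hs2 k hk0 hk1)]
  have hC : ∀ k : ℝ, 0 < k → k < 1 →
      ‖1 - x k‖ = 2 * Real.sin ((1 - k) * θ / 4) := by
    intro k hk0 hk1
    have h := abs_exp_sub_exp 0 ((1-k)*θ/2)
    rw [Complex.ofReal_zero, zero_mul, Complex.exp_zero] at h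
    rw [hex, h, show (0 - (1-k)*θ/2)/2 = -((1-k)*θ/4) by ring,
      Real.sin_neg, abs_neg, abs_of_pos (hs3 k hk0 hk1)]
  have hD : ∀ k : ℝ, 0 < k → k < 1 →
      ‖Complex.exp ((θ:ℝ) * Complex.I) - y k‖
        = 2 * Real.sin ((1 - k) * θ / 4) := by
    intro k hk0 hk1
    rw [hey, abs_exp_sub_exp, show (θ - (1+k)*θ/2)/2 = (1-k)*θ/4 by ring,
      abs_of_pos (hs3 k hk0 hk1)]
  have hxabs : ∀ k : ℝ, ‖x k‖ = 1 := by
    intro k; rw [hex]; exact Complex.norm_exp_ofReal_mul_I _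
  have hP1 : ∀ k : ℝ, 0 < k → k < 1 →
      crossRatio 1 (x k) (Complex.exp (θ * Complex.I)) (y k) =
        Real.sin (θ / 2) * Real.sin (k * θ / 2) / (Real.sin ((1 - k) * θ / 4))^2 := by
    intro k hk0 hk1
    rw [crossRatio, hA, hB k hk0 hk1, hC k hk0 hk1, hD k hk0 hk1]
    field_simp [(hs3 k hk0 hk1).ne']
  have hP2 : ∀ k : ℝ, 0 < k → k < 1 →
      ‖x k - y k‖ / ‖x k‖ = 2 * Real.sin (k * θ / 2) := by
    intro k hk0 hk1
    rw [hB k hk0 hk1, hxabs, div_one]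
  refine ⟨hP1, hP2, ?_, ?_⟩
  · set g : ℝ → ℝ := fun k => Real.sin (θ / 2) / (2 * Real.sin ((1 - k) * θ / 4) ^ 2) with hgdef
    have hg0 : g 0 = Real.cos (θ / 4) / Real.sin (θ / 4) := by
      simp only [hgdef]
      rw [show (1 - (0:ℝ)) * θ / 4 = θ / 4 by ring, show θ / 2 = 2 * (θ / 4) by ring,
        Real.sin_two_mul]
      field_simp
    have hc : ContinuousAt g 0 := by
      apply ContinuousAt.div continuousAt_const
      · fun_prop
      · rw [show (1 - (0:ℝ)) * θ / 4 = θ / 4 by ring]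
        positivity
    have hgt : Tendsto g (nhdsWithin 0 (Set.Ioi 0)) (nhds (Real.cos (θ / 4) / Real.sin (θ / 4))) := by
      rw [← hg0]
      exact (hc.tendsto).mono_left nhdsWithin_le_nhds
    refine hgt.congr' ?_
    filter_upwards [Ioo_mem_nhdsGT_of_mem (by constructor <;> norm_num : (0:ℝ) ∈ Set.Ico 0 1)] with k hk
    rw [hP1 k hk.1 hk.2, hP2 k hk.1 hk.2, hgdef]
    field_simp [(hs2 k hk.1 hk.2).ne', (hs3 k hk.1 hk.2).ne']
    rw [mul_comm (Real.sin (θ * (1 - k) / 4) ^ 2), ← div_div,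
      div_self (by rw [mul_comm θ k]; exact (hs2 k hk.1 hk.2).ne')]
  · rw [div_lt_one hsθ4]
    have h1 : Real.cos (θ / 4) < Real.cos (Real.pi / 4) :=
      Real.cos_lt_cos_of_nonneg_of_le_pi (by positivity) (by linarith) (by linarith)
    have h2 : Real.sin (Real.pi / 4) < Real.sin (θ / 4) := by
      apply Real.sin_lt_sin_of_lt_of_le_pi_div_two (by linarith) (by linarith) (by linarith)
    rw [Real.cos_pi_div_four] at h1
    rw [Real.sin_pi_div_four] at h2
    linarith
end

section
/- For x = r·e^{i(1-k)θ/2} and y = r·e^{i(1+k)θ/2} with r > 0, 0 < k < 1, and 0 < θ < 2π, the hyperbolic distance in the sector S_θ satisfies ρ_{S_θ}(x,y) = log(1 + sin(kπ/2)/sin²((1-k)π/4)). -/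
open Complex Real

/-- `artanh t = (1/2) log((1+t)/(1-t))`, the inverse hyperbolic tangent. -/
noncomputable def artanh (t : ℝ) : ℝ := Real.log ((1 + t) / (1 - t)) / 2

/-- The hyperbolic distance in the upper half-plane, characterized by
`th(ρ/2) = |a - b| / |a - conj b|`. -/
noncomputable def rhoH (a b : ℂ) : ℝ :=
  2 * _root_.artanh (‖a - b‖ / ‖a - (starRingEnd ℂ) b‖)

theorem stmt7 (r k θ : ℝ) (hr : 0 < r) (hk1 : 0 < k) (hk2 : k < 1)
    (hθ1 : 0 < θ) (hθ2 : θ < 2 * Real.pi)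
    (X Y : ℂ)
    -- images of `x = r·e^{i(1-k)θ/2}` and `y = r·e^{i(1+k)θ/2}` under `z ↦ z^{π/θ}`,
    -- the conformal map of the sector `S_θ` onto the upper half-plane:
    (hX : X = (r ^ (Real.pi / θ) : ℝ) * Complex.exp (((1 - k) * Real.pi / 2) * Complex.I))
    (hY : Y = (r ^ (Real.pi / θ) : ℝ) * Complex.exp (((1 + k) * Real.pi / 2) * Complex.I)) :
    rhoH X Y = Real.log (1 + Real.sin (k * Real.pi / 2) / (Real.sin ((1 - k) * Real.pi / 4))^2) := by

  have hπ := Real.pi_pos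
  set R := r ^ (Real.pi / θ) with hR
  have hRpos : 0 < R := Real.rpow_pos_of_pos hr _
  set α : ℝ := (1 - k) * Real.pi / 2 with hα
  have hα0 : 0 < α := by
    apply div_pos (mul_pos (by linarith) hπ) two_pos
  have hα2 : α < Real.pi / 2 := by
    rw [hα]
    nlinarith
  have hc0 : 0 < Real.cos α := Real.cos_pos_of_mem_Ioo ⟨by linarith, hα2⟩
  have hc1 : Real.cos α < 1 := by
    have h := Real.cos_lt_cos_of_nonneg_of_le_pi (le_refl 0) (by linarith) hα0
    simpa using h
  have h1 : ((1 - (k:ℂ)) * (Real.pi:ℂ) / 2) = (α : ℂ) := by rw [hα]; push_cast; ring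
  have h2 : ((1 + (k:ℂ)) * (Real.pi:ℂ) / 2) = ((Real.pi - α : ℝ) : ℂ) := by
    rw [hα]; push_cast; ring
  have eX : X = (R : ℂ) * (Real.cos α + Real.sin α * Complex.I) := by
    rw [hX, h1, Complex.exp_mul_I, ← Complex.ofReal_cos, ← Complex.ofReal_sin]
  have eY : Y = (R : ℂ) * (-Real.cos α + Real.sin α * Complex.I) := by
    rw [hY, h2, Complex.exp_mul_I, ← Complex.ofReal_cos, ← Complex.ofReal_sin,
      Real.cos_pi_sub, Real.sin_pi_sub]
    push_cast; ring
  have habs1 : ‖X - Y‖ = 2 * R * Real.cos α := by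
    have hXY : X - Y = ((2 * R * Real.cos α : ℝ) : ℂ) := by
      rw [eX, eY]; push_cast; ring
    rw [hXY, Complex.norm_real, Real.norm_eq_abs, abs_of_pos]; positivity
  have habs2 : ‖X - (starRingEnd ℂ) Y‖ = 2 * R := by
    have hc : X - (starRingEnd ℂ) Y = ((2 * R : ℝ) : ℂ) * Complex.exp ((α : ℂ) * Complex.I) := by
      rw [eX, eY, Complex.exp_mul_I, ← Complex.ofReal_cos, ← Complex.ofReal_sin]
      simp only [map_mul, map_add, map_neg, Complex.conj_ofReal, Complex.conj_I]
      push_cast; ring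
    rw [hc, norm_mul, Complex.norm_real, Complex.norm_exp_ofReal_mul_I, mul_one,
      Real.norm_eq_abs, abs_of_pos]; positivity
  have hRne : (2 : ℝ) * R ≠ 0 := by positivity
  have hdiv : 2 * R * Real.cos α / (2 * R) = Real.cos α := by field_simp
  have hs : Real.sin (k * Real.pi / 2) = Real.cos α := by
    rw [show k * Real.pi / 2 = Real.pi / 2 - α by rw [hα]; ring, Real.sin_pi_div_two_sub]
  have hh : Real.sin ((1 - k) * Real.pi / 4) ^ 2 = (1 - Real.cos α) / 2 := by
    rw [show (1 - k) * Real.pi / 4 = α / 2 by rw [hα]; ring]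
    have h := Real.sin_sq_eq_half_sub (α / 2)
    rw [show 2 * (α / 2) = α by ring] at h
    linarith
  have hc1' : (1 : ℝ) - Real.cos α ≠ 0 := by linarith
  have harg : 1 + Real.sin (k * Real.pi / 2) / Real.sin ((1 - k) * Real.pi / 4) ^ 2
      = (1 + Real.cos α) / (1 - Real.cos α) := by
    rw [hs, hh]; field_simp; ring
  rw [rhoH, habs1, habs2, hdiv, _root_.artanh, harg]
  ring
end

section
/- For fixed u, v ∈ (0, π] with u ≤ v, the function k ↦ sin(u·k)/sin(v·k) is monotonically increasing on (0,1), and if u > v it is monotonically decreasing on (0,1). -/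
open Real Set

private lemma hasDerivAt_sin_mul (w x : ℝ) :
    HasDerivAt (fun t : ℝ => Real.sin (w * t)) (w * Real.cos (w * x)) x := by
  have h : HasDerivAt (fun t : ℝ => w * t) w x := by
    simpa using (hasDerivAt_id x).const_mul w
  convert h.sin using 1
  ring

private lemma hasDerivAt_cos_mul (w x : ℝ) :
    HasDerivAt (fun t : ℝ => Real.cos (w * t)) (-(w * Real.sin (w * x))) x := by
  have h : HasDerivAt (fun t : ℝ => w * t) w x := by
    simpa using (hasDerivAt_id x).const_mul w
  convert h.cos using 1
  ring

private lemma g_hasDeriv (u v x : ℝ) :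
    HasDerivAt (fun t : ℝ => u * Real.cos (u * t) * Real.sin (v * t)
        - v * Real.sin (u * t) * Real.cos (v * t))
      ((v ^ 2 - u ^ 2) * (Real.sin (u * x) * Real.sin (v * x))) x := by
  have h1 := ((hasDerivAt_cos_mul u x).const_mul u).mul (hasDerivAt_sin_mul v x)
  have h2 := ((hasDerivAt_sin_mul u x).const_mul v).mul (hasDerivAt_cos_mul v x)
  refine (h1.sub h2).congr_deriv ?_
  ring

private lemma g_nonneg {u v : ℝ} (hu0 : 0 < u) (huv : u ≤ v) (hvpi : v ≤ Real.pi)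
    {k : ℝ} (hk : k ∈ Set.Icc (0:ℝ) 1) :
    0 ≤ u * Real.cos (u * k) * Real.sin (v * k) - v * Real.sin (u * k) * Real.cos (v * k) := by
  set g : ℝ → ℝ := fun t => u * Real.cos (u * t) * Real.sin (v * t)
      - v * Real.sin (u * t) * Real.cos (v * t) with hg
  have hmono : MonotoneOn g (Set.Icc 0 1) := by
    apply monotoneOn_of_deriv_nonneg (convex_Icc 0 1)
    · exact Continuous.continuousOn (by fun_prop)
    · intro x _
      exact (g_hasDeriv u v x).differentiableAt.differentiableWithinAt
    · intro x hx
      rw [interior_Icc] at hx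
      rw [(g_hasDeriv u v x).deriv]
      have hxu : 0 ≤ Real.sin (u * x) := by
        apply Real.sin_nonneg_of_nonneg_of_le_pi (by nlinarith [hx.1])
        calc u * x ≤ u * 1 := by nlinarith [hx.2]
          _ ≤ Real.pi := by linarith
      have hxv : 0 ≤ Real.sin (v * x) := by
        apply Real.sin_nonneg_of_nonneg_of_le_pi (by nlinarith [hx.1])
        calc v * x ≤ v * 1 := by nlinarith [hx.2, hu0.le.trans huv]
          _ ≤ Real.pi := by linarith
      have : u ^ 2 ≤ v ^ 2 := by nlinarith
      exact mul_nonneg (by linarith) (mul_nonneg hxu hxv)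
  have h0 : g 0 = 0 := by simp [hg]
  have h2 := hmono (Set.left_mem_Icc.mpr zero_le_one) hk hk.1
  simpa [hg, h0] using h2

private lemma sin_pos_aux {w k : ℝ} (hw : w ∈ Set.Ioc 0 Real.pi) (hk : k ∈ Set.Ioo (0:ℝ) 1) :
    0 < Real.sin (w * k) := by
  apply Real.sin_pos_of_pos_of_lt_pi (mul_pos hw.1 hk.1)
  calc w * k < w * 1 := by nlinarith [hw.1, hk.2]
    _ ≤ Real.pi := by linarith [hw.2]

private lemma mono_aux {u v : ℝ} (hu : u ∈ Set.Ioc 0 Real.pi) (hv : v ∈ Set.Ioc 0 Real.pi)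
    (huv : u ≤ v) :
    MonotoneOn (fun k : ℝ => Real.sin (u * k) / Real.sin (v * k)) (Set.Ioo 0 1) := by
  apply monotoneOn_of_deriv_nonneg (convex_Ioo 0 1)
  · apply ContinuousOn.div (by fun_prop) (by fun_prop)
    intro x hx
    exact (sin_pos_aux hv hx).ne'
  · intro x hx
    rw [interior_Ioo] at hx
    exact ((hasDerivAt_sin_mul u x).div (hasDerivAt_sin_mul v x)
      (sin_pos_aux hv hx).ne').differentiableAt.differentiableWithinAt
  · intro x hx
    rw [interior_Ioo] at hx
    have hne := (sin_pos_aux hv hx).ne'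
    rw [HasDerivAt.deriv (f := fun k => Real.sin (u * k) / Real.sin (v * k))
      (by exact (hasDerivAt_sin_mul u x).div (hasDerivAt_sin_mul v x) hne)]
    apply div_nonneg _ (sq_nonneg _)
    have := g_nonneg hu.1 huv hv.2 (Set.mem_Icc.mpr ⟨hx.1.le, hx.2.le⟩)
    nlinarith [this]

theorem stmt8 (u v : ℝ) (hu : u ∈ Set.Ioc 0 Real.pi) (hv : v ∈ Set.Ioc 0 Real.pi) :
    (u ≤ v → MonotoneOn (fun k : ℝ => Real.sin (u * k) / Real.sin (v * k)) (Set.Ioo 0 1)) ∧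
    (v < u → AntitoneOn (fun k : ℝ => Real.sin (u * k) / Real.sin (v * k)) (Set.Ioo 0 1)) := by
  constructor
  · exact fun h => mono_aux hu hv h
  · intro h x hx y hy hxy
    have hmono := mono_aux hv hu h.le hx hy hxy
    have hux := sin_pos_aux hu hx
    have huy := sin_pos_aux hu hy
    have hvx := sin_pos_aux hv hx
    have hvy := sin_pos_aux hv hy
    simp only at hmono ⊢
    rw [div_le_div_iff₀ hux huy] at hmono
    rw [div_le_div_iff₀ hvy hvx]
    nlinarith [hmono]
end

section
/- The function t ↦ t·sin(t)/sin²(t/2) is decreasing on (0, 2π). -/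
open Real Set

lemma stmt10_hasDerivAt {x : ℝ} (hx : x ∈ Set.Ioo 0 (2 * Real.pi)) :
    HasDerivAt (fun t : ℝ => t * Real.sin t / (Real.sin (t / 2))^2)
      ((Real.sin x - x) / (Real.sin (x / 2))^2) x := by
  have hs : 0 < Real.sin (x / 2) := by
    apply Real.sin_pos_of_pos_of_lt_pi
    · linarith [hx.1]
    · have := hx.2
      have hpi : 0 < Real.pi := Real.pi_pos
      linarith
  have hs0 : Real.sin (x / 2) ≠ 0 := ne_of_gt hs
  have hnum : HasDerivAt (fun t : ℝ => t * Real.sin t)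
      (1 * Real.sin x + x * Real.cos x) x :=
    (hasDerivAt_id x).mul (Real.hasDerivAt_sin x)
  have hhalf : HasDerivAt (fun t : ℝ => Real.sin (t / 2))
      (Real.cos (x / 2) * (1 / 2)) x := by
    have h1 : HasDerivAt (fun t : ℝ => t / 2) (1 / 2) x := by
      simpa using (hasDerivAt_id x).div_const 2
    exact (Real.hasDerivAt_sin (x / 2)).comp x h1
  have hden : HasDerivAt (fun t : ℝ => (Real.sin (t / 2)) ^ 2)
      (2 * Real.sin (x / 2) ^ 1 * (Real.cos (x / 2) * (1 / 2))) x := by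
    simpa using hhalf.fun_pow 2
  have hdiv := hnum.fun_div hden (by positivity)
  refine hdiv.congr_deriv ?_
  have hsin : Real.sin x = 2 * Real.sin (x / 2) * Real.cos (x / 2) := by
    rw [← Real.sin_two_mul]; ring_nf
  have hcos : Real.cos x = 2 * Real.cos (x / 2) ^ 2 - 1 := by
    rw [← Real.cos_two_mul]; ring_nf
  have hpyth : Real.sin (x / 2) ^ 2 + Real.cos (x / 2) ^ 2 = 1 :=
    Real.sin_sq_add_cos_sq (x / 2)
  field_simp
  rw [hsin, hcos]
  nlinarith [hpyth, sq_nonneg (Real.sin (x/2)), sq_nonneg (Real.cos (x/2))]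

theorem stmt10 :
    AntitoneOn (fun t : ℝ => t * Real.sin t / (Real.sin (t / 2))^2)
      (Set.Ioo 0 (2 * Real.pi)) := by
  have hconv : Convex ℝ (Set.Ioo (0:ℝ) (2 * Real.pi)) := convex_Ioo _ _
  apply antitoneOn_of_deriv_nonpos hconv
  · intro x hx
    exact (stmt10_hasDerivAt hx).differentiableAt.continuousAt.continuousWithinAt
  · intro x hx
    rw [interior_Ioo] at hx
    exact (stmt10_hasDerivAt hx).differentiableAt.differentiableWithinAt
  · intro x hx
    rw [interior_Ioo] at hx
    rw [(stmt10_hasDerivAt hx).deriv]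
    have hs : (0:ℝ) < Real.sin (x / 2) ^ 2 := by
      have : 0 < Real.sin (x / 2) := by
        apply Real.sin_pos_of_pos_of_lt_pi
        · linarith [hx.1]
        · have := hx.2; have hpi : 0 < Real.pi := Real.pi_pos; linarith
      positivity
    have : Real.sin x < x := Real.sin_lt hx.1
    apply div_nonpos_of_nonpos_of_nonneg <;> nlinarith
end

section
/- For a fixed μ with 0 < μ ≤ 1, the function q ↦ log(1 + μ·q)/log(1 + q) is increasing on (0, ∞); for μ > 1 it is decreasing on (0, ∞). -/
open Real Set

lemma key_ineq_le (μ q : ℝ) (hμ : 0 ≤ μ) (hμ1 : μ ≤ 1) (hq : 0 < q) :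
    (1 + μ * q) * Real.log (1 + μ * q) ≤ μ * ((1 + q) * Real.log (1 + q)) := by
  have h := Real.convexOn_mul_log.2 (show (1:ℝ) ∈ Set.Ici (0:ℝ) by norm_num)
    (show (1 + q) ∈ Set.Ici (0:ℝ) by simp; linarith)
    (show (0:ℝ) ≤ 1 - μ by linarith) hμ (show (1 - μ) + μ = 1 by ring)
  simp only [smul_eq_mul, Real.log_one] at h
  have hpt : (1 - μ) * 1 + μ * (1 + q) = 1 + μ * q := by ring
  rw [hpt] at h
  nlinarith [h]

lemma key_ineq_ge (μ q : ℝ) (hμ : 1 < μ) (hq : 0 < q) :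
    μ * ((1 + q) * Real.log (1 + q)) ≤ (1 + μ * q) * Real.log (1 + μ * q) := by
  have hμ0 : 0 < μ := by linarith
  have h := Real.convexOn_mul_log.2 (show (1:ℝ) ∈ Set.Ici (0:ℝ) by norm_num)
    (show (1 + μ * q) ∈ Set.Ici (0:ℝ) by simp; nlinarith)
    (show (0:ℝ) ≤ 1 - 1/μ by rw [sub_nonneg]; exact div_le_one_of_le₀ (by linarith) hμ0.le)
    (show (0:ℝ) ≤ 1/μ by positivity) (show (1 - 1/μ) + 1/μ = 1 by ring)
  simp only [smul_eq_mul, Real.log_one] at h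
  have hpt : (1 - 1/μ) * 1 + 1/μ * (1 + μ * q) = 1 + q := by field_simp; ring
  rw [hpt] at h
  have := mul_le_mul_of_nonneg_left h hμ0.le
  calc μ * ((1 + q) * Real.log (1 + q)) ≤ μ * ((1 - 1/μ) * (1 * 0) + 1/μ * ((1 + μ*q) * Real.log (1 + μ*q))) := this
    _ = (1 + μ * q) * Real.log (1 + μ * q) := by field_simp; ring

lemma hder (μ : ℝ) {q : ℝ} (hμq : 0 < 1 + μ * q) (hq : 0 < q) :
    HasDerivAt (fun q : ℝ => Real.log (1 + μ * q) / Real.log (1 + q))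
      ((μ / (1 + μ * q) * Real.log (1 + q) - Real.log (1 + μ * q) * (1 / (1 + q))) /
        (Real.log (1 + q)) ^ 2) q := by
  have hq1 : (0:ℝ) < 1 + q := by linarith
  have h1 : HasDerivAt (fun q : ℝ => 1 + μ * q) μ q := by
    simpa using ((hasDerivAt_id q).const_mul μ).const_add 1
  have h2 : HasDerivAt (fun q : ℝ => 1 + q) 1 q := by
    simpa using (hasDerivAt_id q).const_add 1
  have hl1 := h1.log hμq.ne'
  have hl2 := h2.log hq1.ne'
  have hlne : Real.log (1 + q) ≠ 0 := by
    exact (Real.log_pos (show (1:ℝ) < 1 + q by linarith)).ne'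
  simpa [Pi.div_def] using hl1.div hl2 hlne

theorem stmt11 (μ : ℝ) :
    (0 < μ → μ ≤ 1 →
      MonotoneOn (fun q : ℝ => Real.log (1 + μ * q) / Real.log (1 + q)) (Set.Ioi 0)) ∧
    (1 < μ →
      AntitoneOn (fun q : ℝ => Real.log (1 + μ * q) / Real.log (1 + q)) (Set.Ioi 0)) := by
  constructor
  · intro hμ hμ1
    apply monotoneOn_of_deriv_nonneg (convex_Ioi 0)
    · intro q hq
      have hq : 0 < q := hq
      have hμq : 0 < 1 + μ * q := by nlinarith
      exact (hder μ hμq hq).differentiableAt.continuousAt.continuousWithinAt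
    · rw [interior_Ioi]
      intro q hq
      have hq : 0 < q := hq
      have hμq : 0 < 1 + μ * q := by nlinarith
      exact (hder μ hμq hq).differentiableAt.differentiableWithinAt
    · rw [interior_Ioi]
      intro q hq
      have hq : 0 < q := hq
      have hμq : 0 < 1 + μ * q := by nlinarith
      rw [(hder μ hμq hq).deriv]
      have hq1 : (0:ℝ) < 1 + q := by linarith
      have key := key_ineq_le μ q hμ.le hμ1 hq
      have hnum : 0 ≤ μ / (1 + μ * q) * Real.log (1 + q) - Real.log (1 + μ * q) * (1 / (1 + q)) := by
        rw [sub_nonneg, div_mul_eq_mul_div, mul_one_div, div_le_div_iff₀ hq1 hμq]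
        nlinarith
      positivity
  · intro hμ
    apply antitoneOn_of_deriv_nonpos (convex_Ioi 0)
    · intro q hq
      have hq : 0 < q := hq
      have hμq : 0 < 1 + μ * q := by nlinarith
      exact (hder μ hμq hq).differentiableAt.continuousAt.continuousWithinAt
    · rw [interior_Ioi]
      intro q hq
      have hq : 0 < q := hq
      have hμq : 0 < 1 + μ * q := by nlinarith
      exact (hder μ hμq hq).differentiableAt.differentiableWithinAt
    · rw [interior_Ioi]
      intro q hq
      have hq : 0 < q := hq
      have hμq : 0 < 1 + μ * q := by nlinarith
      rw [(hder μ hμq hq).deriv]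
      have hq1 : (0:ℝ) < 1 + q := by linarith
      have key := key_ineq_ge μ q hμ hq
      have hnum : μ / (1 + μ * q) * Real.log (1 + q) - Real.log (1 + μ * q) * (1 / (1 + q)) ≤ 0 := by
        rw [sub_nonpos, div_mul_eq_mul_div, mul_one_div, div_le_div_iff₀ hμq hq1]
        nlinarith
      have hd : (0:ℝ) < (Real.log (1 + q)) ^ 2 := by
        have := Real.log_pos (by linarith : (1:ℝ) < 1 + q)
        positivity
      exact div_nonpos_of_nonpos_of_nonneg hnum hd.le
end
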